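/- Let E = {0} ∪ ⋃_{k=1}^∞ [2^{−2k+1}, 2^{−2k+2}] ⊆ ℝ. Then: (1) [0,1] = E ∪ (1/2)·E; (2) E = (1/4)·E ∪ [1/2,1]; (3) E = (1/4)·E ∪ ((1/4)·E + 1/2) ∪ ((1/2)·E + 1/2). In particular E is a self-similar set with respect to the three similarity maps x ↦ x/4, x ↦ x/4 + 1/2, x ↦ x/2 + 1/2. -/
import Mathlib


open Pointwise

/-- `E = {0} ∪ ⋃_{k≥1} [2^{-2k+1}, 2^{-2k+2}] ⊆ ℝ`. -/
def setE : Set ℝ :=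
  insert 0 (⋃ k : ℕ, Set.Icc ((2 : ℝ) ^ (-2 * ((k : ℤ) + 1) + 1)) ((2 : ℝ) ^ (-2 * ((k : ℤ) + 1) + 2)))

/-- With `E = {0} ∪ ⋃_{k≥1} [2^{-2k+1}, 2^{-2k+2}]`:
(1) `[0,1] = E ∪ (1/2)·E`; (2) `E = (1/4)·E ∪ [1/2,1]`;
(3) `E = (1/4)·E ∪ ((1/4)·E + 1/2) ∪ ((1/2)·E + 1/2)`, so `E` is self-similar
for the maps `x ↦ x/4`, `x ↦ x/4 + 1/2`, `x ↦ x/2 + 1/2`. -/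
lemma mem_setE (x : ℝ) : x ∈ setE ↔ x = 0 ∨ ∃ k : ℕ, (2:ℝ)^(-2*(k:ℤ)-1) ≤ x ∧ x ≤ (2:ℝ)^(-2*(k:ℤ)) := by
  unfold setE
  simp only [Set.mem_insert_iff, Set.mem_iUnion, Set.mem_Icc]
  refine or_congr Iff.rfl (exists_congr fun k => ?_)
  rw [show -2*((k:ℤ)+1)+1 = -2*k-1 by ring, show -2*((k:ℤ)+1)+2 = -2*k by ring]

lemma neg_zpow_eq (n : ℕ) : (2:ℝ)^(-(n:ℤ)) = (1/2:ℝ)^n := by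
  rw [one_div, inv_pow, ← zpow_natCast, ← zpow_neg]

lemma exists_pow_sandwich {x : ℝ} (hx : 0 < x) (hx1 : x ≤ 1) :
    ∃ n : ℕ, (2:ℝ)^(-(n:ℤ)-1) ≤ x ∧ x ≤ (2:ℝ)^(-(n:ℤ)) := by
  have hexists : ∃ n : ℕ, (2:ℝ)^(-(n:ℤ)-1) < x := by
    obtain ⟨n, hn⟩ := exists_pow_lt_of_lt_one hx (by norm_num : (1/2:ℝ) < 1)
    refine ⟨n, lt_of_le_of_lt ?_ hn⟩
    have h1 : (2:ℝ)^(-(n:ℤ)-1) = (1/2:ℝ)^(n+1) := by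
      rw [show (-(n:ℤ)-1) = -((n+1:ℕ):ℤ) by push_cast; ring, neg_zpow_eq]
    rw [h1]
    exact pow_le_pow_of_le_one (by norm_num) (by norm_num) (Nat.le_succ n)
  classical
  set n := Nat.find hexists with hn
  refine ⟨n, (Nat.find_spec hexists).le, ?_⟩
  match n, hn with
  | 0, _ => simpa using hx1
  | (m+1), hn =>
    have := Nat.find_min hexists (by rw [← hn]; exact Nat.lt_succ_self m)
    push_neg at this
    calc x ≤ (2:ℝ)^(-(m:ℤ)-1) := this
    _ = (2:ℝ)^(-((m+1:ℕ):ℤ)) := by push_cast; ring_nf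

lemma two_zpow_mul (a b : ℤ) : (2:ℝ)^a * (2:ℝ)^b = (2:ℝ)^(a+b) := (zpow_add₀ two_ne_zero a b).symm

lemma two_mul_zpow (a : ℤ) : (2:ℝ) * (2:ℝ)^a = (2:ℝ)^(a+1) := by
  rw [zpow_add_one₀ (two_ne_zero)]; ring

lemma four_mul_zpow (a : ℤ) : (4:ℝ) * (2:ℝ)^a = (2:ℝ)^(a+2) := by
  rw [show (4:ℝ) = 2*2 by norm_num, mul_assoc, two_mul_zpow, two_mul_zpow]
  congr 1; ring

lemma mem_half_smul (x : ℝ) : x ∈ (2:ℝ)⁻¹ • setE ↔ 2*x ∈ setE := by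
  rw [Set.mem_smul_set_iff_inv_smul_mem₀ (by norm_num : (2:ℝ)⁻¹ ≠ 0), inv_inv, smul_eq_mul]

lemma mem_quarter_smul (x : ℝ) : x ∈ (4:ℝ)⁻¹ • setE ↔ 4*x ∈ setE := by
  rw [Set.mem_smul_set_iff_inv_smul_mem₀ (by norm_num : (4:ℝ)⁻¹ ≠ 0), inv_inv, smul_eq_mul]

lemma setE_subset : setE ⊆ Set.Icc (0:ℝ) 1 := by
  intro x hx
  rw [mem_setE] at hx
  rcases hx with rfl | ⟨k, hl, hu⟩
  · simp
  · refine ⟨le_trans (zpow_pos (by norm_num) _).le hl, hu.trans ?_⟩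
    exact zpow_le_one_of_nonpos₀ (by norm_num) (by omega)

lemma lemA : Set.Icc (0 : ℝ) 1 = setE ∪ (2 : ℝ)⁻¹ • setE := by
  ext x
  simp only [Set.mem_Icc, Set.mem_union, mem_half_smul]
  constructor
  · rintro ⟨h0, h1⟩
    rcases eq_or_lt_of_le h0 with h | h
    · exact Or.inl ((mem_setE x).2 (Or.inl h.symm))
    · obtain ⟨n, hl, hu⟩ := exists_pow_sandwich h h1
      rcases Nat.even_or_odd n with ⟨k, hk⟩ | ⟨k, hk⟩
      · subst hk
        refine Or.inl ((mem_setE x).2 (Or.inr ⟨k, ?_, ?_⟩))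
        · convert hl using 2; push_cast; ring
        · convert hu using 2; push_cast; ring
      · subst hk
        refine Or.inr ((mem_setE _).2 (Or.inr ⟨k, ?_, ?_⟩))
        · have e : (2:ℝ) * (2:ℝ)^(-((2*k+1:ℕ):ℤ)-1) = (2:ℝ)^(-2*(k:ℤ)-1) := by
            rw [two_mul_zpow]; congr 1; push_cast; ring
          linarith
        · have e : (2:ℝ) * (2:ℝ)^(-((2*k+1:ℕ):ℤ)) = (2:ℝ)^(-2*(k:ℤ)) := by
            rw [two_mul_zpow]; congr 1; push_cast; ring
          linarith
  · rintro (hE | hE)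
    · exact setE_subset hE
    · have := setE_subset hE
      simp only [Set.mem_Icc] at this
      constructor <;> linarith [this.1, this.2]

lemma lemB : setE = (4 : ℝ)⁻¹ • setE ∪ Set.Icc (1 / 2 : ℝ) 1 := by
  ext x
  simp only [Set.mem_union, mem_quarter_smul, Set.mem_Icc, mem_setE]
  constructor
  · rintro (rfl | ⟨k, hl, hu⟩)
    · exact Or.inl (Or.inl (by norm_num))
    · cases k with
      | zero =>
        right
        norm_num at hl hu
        exact ⟨hl, hu⟩
      | succ j =>
        refine Or.inl (Or.inr ⟨j, ?_, ?_⟩)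
        · have e : (4:ℝ) * (2:ℝ)^(-2*((j:ℤ)+1)-1) = (2:ℝ)^(-2*(j:ℤ)-1) := by
            rw [four_mul_zpow]; congr 1; push_cast; ring
          push_cast at hl
          linarith
        · have e : (4:ℝ) * (2:ℝ)^(-2*((j:ℤ)+1)) = (2:ℝ)^(-2*(j:ℤ)) := by
            rw [four_mul_zpow]; congr 1; push_cast; ring
          push_cast at hu
          linarith
  · rintro ((h0 | ⟨k, hl, hu⟩) | ⟨hl, hu⟩)
    · exact Or.inl (by linarith)
    · refine Or.inr ⟨k+1, ?_, ?_⟩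
      · have e : (4:ℝ) * (2:ℝ)^(-2*(((k:ℤ)+1))-1) = (2:ℝ)^(-2*(k:ℤ)-1) := by
          rw [four_mul_zpow]; congr 1; push_cast; ring
        push_cast
        linarith
      · have e : (4:ℝ) * (2:ℝ)^(-2*(((k:ℤ)+1))) = (2:ℝ)^(-2*(k:ℤ)) := by
          rw [four_mul_zpow]; congr 1; push_cast; ring
        push_cast
        linarith
    · exact Or.inr ⟨0, by norm_num; exact hl, by norm_num; exact hu⟩

lemma img_quarter : (fun x : ℝ => x / 4) '' setE = (4:ℝ)⁻¹ • setE := by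
  ext x
  simp only [Set.mem_image, Set.mem_smul_set, smul_eq_mul]
  constructor <;> rintro ⟨y, hy, rfl⟩ <;> exact ⟨y, hy, by ring⟩

lemma img_Icc : (fun x : ℝ => x / 2 + 1 / 2) '' Set.Icc (0:ℝ) 1 = Set.Icc (1/2 : ℝ) 1 := by
  ext x
  simp only [Set.mem_image, Set.mem_Icc]
  constructor
  · rintro ⟨y, ⟨h1, h2⟩, rfl⟩
    constructor <;> linarith
  · rintro ⟨h1, h2⟩
    exact ⟨2*x - 1, ⟨by linarith, by linarith⟩, by ring⟩

lemma img_half : (fun x : ℝ => x / 2 + 1 / 2) '' ((2:ℝ)⁻¹ • setE) = (fun x : ℝ => x / 4 + 1 / 2) '' setE := by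
  ext x
  simp only [Set.mem_image, Set.mem_smul_set, smul_eq_mul]
  constructor
  · rintro ⟨z, ⟨y, hy, rfl⟩, rfl⟩
    exact ⟨y, hy, by ring⟩
  · rintro ⟨y, hy, rfl⟩
    exact ⟨2⁻¹ * y, ⟨y, hy, rfl⟩, by ring⟩

theorem setE_self_similar :
    Set.Icc (0 : ℝ) 1 = setE ∪ (2 : ℝ)⁻¹ • setE
    ∧ setE = (4 : ℝ)⁻¹ • setE ∪ Set.Icc (1 / 2 : ℝ) 1
    ∧ setE = (fun x : ℝ => x / 4) '' setE ∪ (fun x : ℝ => x / 4 + 1 / 2) '' setE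
        ∪ (fun x : ℝ => x / 2 + 1 / 2) '' setE := by
  refine ⟨lemA, lemB, ?_⟩
  have h2 : (fun x : ℝ => x / 4 + 1 / 2) '' setE ∪ (fun x : ℝ => x / 2 + 1 / 2) '' setE
      = Set.Icc (1/2 : ℝ) 1 := by
    rw [← img_Icc, lemA, Set.image_union, img_half]
    exact Set.union_comm _ _
  calc setE = (4 : ℝ)⁻¹ • setE ∪ Set.Icc (1 / 2 : ℝ) 1 := lemB
    _ = (fun x : ℝ => x / 4) '' setE
        ∪ ((fun x : ℝ => x / 4 + 1 / 2) '' setE ∪ (fun x : ℝ => x / 2 + 1 / 2) '' setE) := by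
        rw [img_quarter, h2]
    _ = _ := (Set.union_assoc _ _ _).symm
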